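/- arXiv:2007.10976 — 2 statements merged into one kernel-verified Lean document; each statement's English description precedes it below -/
import Mathlib

section
/- Let ε ∈ (0,1/4], k ≥ 1, let 𝒲 be a family of channels from [2k] to finite alphabets, and consider a deterministic sequentially interactive protocol over n users using 𝒲. Let Z be uniform on {−1,+1}^k and, conditionally on Z, let the inputs be i.i.d. with law p_Z, producing transcript Y^n. Then for every 1 ≤ t ≤ n and every i ∈ {1,…,k}, I(Z_i; Y^t) ≤ (8ε²/k) · Σ_{s=1}^{t} E[ H(W^{Y^{s−1}})_{i,i} ], where the expectation is over the transcript prefix Y^{s−1} and mutual information is measured in nats. -/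
open Finset

namespace Paper

/-- A probability distribution on a finite type, given by its mass function. -/
def IsDist {α : Type*} [Fintype α] (p : α → ℝ) : Prop :=
  (∀ a, 0 ≤ p a) ∧ ∑ a, p a = 1

/-- A channel (row-stochastic kernel) from `α` to the finite alphabet `𝒴`. -/
def IsChannel {α 𝒴 : Type*} [Fintype α] [Fintype 𝒴] (W : α → 𝒴 → ℝ) : Prop :=
  ∀ x, IsDist (W x)

/-- Total variation distance between mass functions on a finite type. -/
noncomputable def tvDist {α : Type*} [Fintype α] (p q : α → ℝ) : ℝ :=
  (∑ a, |p a - q a|) / 2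

/-- The element `2i-1` (1-indexed) of `[2k]`, i.e. index `2i` in 0-indexed terms. -/
def lo {k : ℕ} (i : Fin k) : Fin (2 * k) := ⟨2 * i.val, by have := i.isLt; omega⟩

/-- The element `2i` (1-indexed) of `[2k]`, i.e. index `2i+1` in 0-indexed terms. -/
def hi {k : ℕ} (i : Fin k) : Fin (2 * k) := ⟨2 * i.val + 1, by have := i.isLt; omega⟩

/-- The channel information matrix `H(W)`  (division by `0` yields `0` in Lean,
matching the convention that terms with zero denominator vanish). -/
noncomputable def HMat (k : ℕ) {𝒴 : Type*} [Fintype 𝒴] (W : Fin (2 * k) → 𝒴 → ℝ) :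
    Matrix (Fin k) (Fin k) ℝ := fun i j =>
  ∑ y, (W (lo i) y - W (hi i) y) * (W (lo j) y - W (hi j) y) / (∑ x, W x y)

/-- Nuclear norm of a real symmetric matrix (sum of absolute values of eigenvalues). -/
noncomputable def nucNorm {k : ℕ} (A : Matrix (Fin k) (Fin k) ℝ) : ℝ :=
  if h : A.IsHermitian then ∑ i, |h.eigenvalues i| else 0

/-- Operator (spectral) norm of a real symmetric matrix. -/
noncomputable def opNorm {k : ℕ} (A : Matrix (Fin k) (Fin k) ℝ) : ℝ :=
  if h : A.IsHermitian then ⨆ i, |h.eigenvalues i| else 0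

/-- Frobenius norm of a matrix. -/
noncomputable def frobNorm {k : ℕ} (A : Matrix (Fin k) (Fin k) ℝ) : ℝ :=
  Real.sqrt (∑ i, ∑ j, (A i j) ^ 2)

/-- `‖𝒲‖_*`, the maximal nuclear norm of `H(W)` over the family. -/
noncomputable def famNuc (k : ℕ) {𝒴 : Type*} [Fintype 𝒴]
    (𝒲 : Set (Fin (2 * k) → 𝒴 → ℝ)) : ℝ :=
  sSup ((fun W => nucNorm (HMat k W)) '' 𝒲)

/-- `‖𝒲‖_op`, the maximal operator norm of `H(W)` over the family. -/
noncomputable def famOp (k : ℕ) {𝒴 : Type*} [Fintype 𝒴]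
    (𝒲 : Set (Fin (2 * k) → 𝒴 → ℝ)) : ℝ :=
  sSup ((fun W => opNorm (HMat k W)) '' 𝒲)

/-- `‖𝒲‖_F`, the maximal Frobenius norm of `H(W)` over the family. -/
noncomputable def famFrob (k : ℕ) {𝒴 : Type*} [Fintype 𝒴]
    (𝒲 : Set (Fin (2 * k) → 𝒴 → ℝ)) : ℝ :=
  sSup ((fun W => frobNorm (HMat k W)) '' 𝒲)

/-- A deterministic sequentially interactive protocol over `n` users: to each user `t`
and each message prefix it assigns a channel. -/
def Protocol (k n : ℕ) (𝒴 : Type*) : Type _ :=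
  (t : Fin n) → (Fin t.val → 𝒴) → Fin (2 * k) → 𝒴 → ℝ

/-- All channels used by the protocol belong to the family `𝒲`. -/
def UsesFamily {k n : ℕ} {𝒴 : Type*} (π : Protocol k n 𝒴)
    (𝒲 : Set (Fin (2 * k) → 𝒴 → ℝ)) : Prop :=
  ∀ t pre, π t pre ∈ 𝒲

/-- All kernels used by the protocol are genuine channels. -/
def ChannelProtocol {k n : ℕ} {𝒴 : Type*} [Fintype 𝒴] (π : Protocol k n 𝒴) : Prop :=
  ∀ t pre, IsChannel (π t pre)

/-- Distribution of the first `t` messages of the transcript when the inputs are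
i.i.d. with law `p`. -/
noncomputable def prefixDist {k n : ℕ} {𝒴 : Type*} [Fintype 𝒴] (π : Protocol k n 𝒴)
    (p : Fin (2 * k) → ℝ) (t : ℕ) (ht : t ≤ n) (y : Fin t → 𝒴) : ℝ :=
  ∏ s : Fin t, ∑ x, p x *
    π ⟨s.val, lt_of_lt_of_le s.isLt ht⟩ (fun r => y ⟨r.val, lt_trans r.isLt s.isLt⟩) x (y s)

/-- Distribution of the full transcript `Y^n` when the inputs are i.i.d. with law `p`. -/
noncomputable def transDist {k n : ℕ} {𝒴 : Type*} [Fintype 𝒴] (π : Protocol k n 𝒴)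
    (p : Fin (2 * k) → ℝ) (y : Fin n → 𝒴) : ℝ :=
  prefixDist π p n le_rfl y

/-- The uniform distribution on `[2k]`. -/
noncomputable def uniform2k (k : ℕ) : Fin (2 * k) → ℝ := fun _ => (2 * (k : ℝ))⁻¹

/-- An `(n, ε)`-estimator using `𝒲`: a public-coin sequentially interactive protocol
(seed distribution `μ`, protocols `π u`, channels from `𝒲`) together with an estimator
`est` such that, for every input distribution `p`, the probability that the estimate is
more than `ε` away from `p` in total variation is at most `1/100`. -/
def IsEstimator {k n : ℕ} {𝒴 𝒰 : Type*} [Fintype 𝒴] [Fintype 𝒰]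
    (𝒲 : Set (Fin (2 * k) → 𝒴 → ℝ)) (μ : 𝒰 → ℝ) (π : 𝒰 → Protocol k n 𝒴)
    (est : (Fin n → 𝒴) → 𝒰 → Fin (2 * k) → ℝ) (ε : ℝ) : Prop :=
  IsDist μ ∧ (∀ u, UsesFamily (π u) 𝒲) ∧ (∀ u, ChannelProtocol (π u)) ∧
  (∀ y u, IsDist (est y u)) ∧
  ∀ p : Fin (2 * k) → ℝ, IsDist p →
    (∑ u, ∑ y : Fin n → 𝒴, μ u * (transDist (π u) p y *
      (if ε < tvDist (est y u) p then (1 : ℝ) else 0))) ≤ 1 / 100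

/-- An `(n, ε)`-uniformity test using `𝒲`: a public-coin sequentially interactive
protocol together with a randomized decision rule `T` (probability of output `1`)
accepting uniform and rejecting `ε`-far distributions with probability `99/100`. -/
def IsUnifTest {k n : ℕ} {𝒴 𝒰 : Type*} [Fintype 𝒴] [Fintype 𝒰]
    (𝒲 : Set (Fin (2 * k) → 𝒴 → ℝ)) (μ : 𝒰 → ℝ) (π : 𝒰 → Protocol k n 𝒴)
    (T : (Fin n → 𝒴) → 𝒰 → ℝ) (ε : ℝ) : Prop :=
  IsDist μ ∧ (∀ u, UsesFamily (π u) 𝒲) ∧ (∀ u, ChannelProtocol (π u)) ∧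
  (∀ y u, T y u ∈ Set.Icc (0 : ℝ) 1) ∧
  (99 / 100 ≤ ∑ u, ∑ y : Fin n → 𝒴, μ u * (transDist (π u) (uniform2k k) y * (1 - T y u))) ∧
  ∀ p : Fin (2 * k) → ℝ, IsDist p → ε ≤ tvDist p (uniform2k k) →
    99 / 100 ≤ ∑ u, ∑ y : Fin n → 𝒴, μ u * (transDist (π u) p y * T y u)

/-- Mutual information (in nats) of a joint mass function on `A × B`. -/
noncomputable def miNats {A B : Type*} [Fintype A] [Fintype B] (j : A → B → ℝ) : ℝ :=
  ∑ a, ∑ b, j a b * Real.log (j a b / ((∑ b', j a b') * (∑ a', j a' b)))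

/-- Mutual information (in bits) of a joint mass function on `A × B`. -/
noncomputable def miBits {A B : Type*} [Fintype A] [Fintype B] (j : A → B → ℝ) : ℝ :=
  ∑ a, ∑ b, j a b * Real.logb 2 (j a b / ((∑ b', j a b') * (∑ a', j a' b)))

/-- Binary entropy function (in bits). -/
noncomputable def binEnt (t : ℝ) : ℝ :=
  -(t * Real.logb 2 t) - (1 - t) * Real.logb 2 (1 - t)

/-- `±1` encoding of a Boolean. -/
def pm (b : Bool) : ℝ := if b then 1 else -1

/-- The joint mass function of `(Z_i, Y)` obtained from a joint mass function of `(Z, Y)`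
for `Z ∈ {−1,+1}^k` (encoded via Booleans). -/
noncomputable def coordJoint {k : ℕ} {𝒴 : Type*} [Fintype 𝒴]
    (j : (Fin k → Bool) → 𝒴 → ℝ) (i : Fin k) : Bool → 𝒴 → ℝ :=
  fun b y => ∑ z : Fin k → Bool, if z i = b then j z y else 0

/-- The Paninski perturbation `p_z` of the uniform distribution on `[2k]`:
`p_z(2i−1) = (1+2ε z_i)/(2k)` and `p_z(2i) = (1−2ε z_i)/(2k)` (1-indexed). -/
noncomputable def paninski (k : ℕ) (ε : ℝ) (z : Fin k → Bool) : Fin (2 * k) → ℝ :=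
  fun x => (1 + (if x.val % 2 = 0 then (1 : ℝ) else -1) * (2 * ε) *
    pm (z ⟨x.val / 2, by have := x.isLt; omega⟩)) / (2 * k)

/-- Chi-square divergence between mass functions on a finite type. -/
noncomputable def chiSq {α : Type*} [Fintype α] (P Q : α → ℝ) : ℝ :=
  ∑ y, (P y - Q y) ^ 2 / Q y

/-- Kullback–Leibler divergence (in nats) between mass functions on a finite type. -/
noncomputable def klDivNats {α : Type*} [Fintype α] (P Q : α → ℝ) : ℝ :=
  ∑ y, P y * Real.log (P y / Q y)

/-- The leaky-query channel `W_u^η` on output alphabet `[2k] ∪ {1*, 0*}`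
(`Sum.inr true = 1*`, `Sum.inr false = 0*`). -/
noncomputable def leaky (k : ℕ) (η : ℝ) (u : Fin (2 * k) → ℝ) :
    Fin (2 * k) → (Fin (2 * k) ⊕ Bool) → ℝ :=
  fun x y => Sum.elim (fun x' => if x' = x then η else 0)
    (fun b => if b then (1 - η) * u x else (1 - η) * (1 - u x)) y

/-- The vector `δ(u)` associated with a leaky-query channel. -/
noncomputable def leakyDelta (k : ℕ) (u : Fin (2 * k) → ℝ) : Fin k → ℝ :=
  fun i => (u (lo i) - u (hi i)) *
    Real.sqrt ((2 * (k : ℝ)) / ((∑ x, u x) * (2 * (k : ℝ) - ∑ x, u x)))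

/-- The partial-erasure channel `W_{x*}` on output alphabet `[2k] ∪ {⊥}`. -/
noncomputable def eraseCh (k : ℕ) (η : ℝ) (xs : Fin (2 * k)) :
    Fin (2 * k) → (Fin (2 * k) ⊕ Unit) → ℝ :=
  fun x y => Sum.elim (fun x' => if x' = x then (if x = xs then 1 else η) else 0)
    (fun _ => if x = xs then 0 else 1 - η) y

/-- The family of all `ρ`-locally differentially private channels from `[2k]` to `𝒴`. -/
def ldpFamily (k : ℕ) {𝒴 : Type*} [Fintype 𝒴] (ρ : ℝ) :
    Set (Fin (2 * k) → 𝒴 → ℝ) :=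
  { W | IsChannel W ∧ ∀ x x' y, W x y ≤ Real.exp ρ * W x' y }


section AuxReal

lemma r_log (p q : ℝ) (hp : 0 ≤ p) (hq : 0 ≤ q) :
    p * Real.log (p / (1/2 * (p+q))) + q * Real.log (q / (1/2 * (p+q))) ≤ (p-q)^2/(p+q) := by
  rcases eq_or_lt_of_le (add_nonneg hp hq) with h | h
  · have hp0 : p = 0 := by linarith [abs_of_nonneg hp]
    have hq0 : q = 0 := by linarith
    simp [hp0, hq0]
  · have key : ∀ r : ℝ, 0 ≤ r → r * Real.log (r / (1/2 * (p+q))) ≤ r * (r / (1/2*(p+q)) - 1) := by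
      intro r hr
      rcases eq_or_lt_of_le hr with h0 | h0
      · simp [← h0]
      · exact mul_le_mul_of_nonneg_left
          (Real.log_le_sub_one_of_pos (div_pos h0 (by linarith))) hr
    have h1 := key p hp
    have h2 := key q hq
    have heq : p * (p / (1/2*(p+q)) - 1) + q * (q / (1/2*(p+q)) - 1) = (p-q)^2/(p+q) := by
      field_simp
      ring
    linarith

lemma r_two_var (x X y Y : ℝ) (hx : |x| ≤ y) (hX : |X| ≤ Y) :
    (x + X)^2 / (y + Y) ≤ x^2/y + X^2/Y := by
  have hy0 : 0 ≤ y := le_trans (abs_nonneg x) hx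
  have hY0 : 0 ≤ Y := le_trans (abs_nonneg X) hX
  rcases eq_or_lt_of_le hy0 with h | h
  · have hx0 : x = 0 := by have := abs_nonneg x; have : |x| = 0 := le_antisymm (h ▸ hx) (abs_nonneg x); exact abs_eq_zero.mp this
    simp [hx0, ← h]
  rcases eq_or_lt_of_le hY0 with h' | h'
  · have hX0 : X = 0 := by have : |X| = 0 := le_antisymm (h' ▸ hX) (abs_nonneg X); exact abs_eq_zero.mp this
    simp [hX0, ← h']
  · rw [div_add_div _ _ (ne_of_gt h) (ne_of_gt h'), div_le_div_iff₀ (by linarith) (by positivity)]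
    nlinarith [sq_nonneg (x*Y - X*y), mul_pos h h']

lemma r_engel {ι : Type*} (s : Finset ι) (a b : ι → ℝ) (ha : ∀ m ∈ s, 0 ≤ a m)
    (hb : ∀ m ∈ s, 0 ≤ b m) :
    (∑ m ∈ s, a m - ∑ m ∈ s, b m)^2 / (∑ m ∈ s, a m + ∑ m ∈ s, b m)
      ≤ ∑ m ∈ s, (a m - b m)^2 / (a m + b m) := by
  classical
  induction s using Finset.cons_induction with
  | empty => simp
  | cons m s hm ih =>
    simp only [Finset.sum_cons]
    have ha' : ∀ x ∈ s, 0 ≤ a x := fun x hx => ha x (Finset.mem_cons_of_mem hx)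
    have hb' : ∀ x ∈ s, 0 ≤ b x := fun x hx => hb x (Finset.mem_cons_of_mem hx)
    have h1 : |a m - b m| ≤ a m + b m := by
      have := ha m (Finset.mem_cons_self m s); have := hb m (Finset.mem_cons_self m s)
      rw [abs_le]; constructor <;> linarith
    have h2 : |∑ x ∈ s, a x - ∑ x ∈ s, b x| ≤ ∑ x ∈ s, a x + ∑ x ∈ s, b x := by
      have hA : 0 ≤ ∑ x ∈ s, a x := Finset.sum_nonneg ha'
      have hB : 0 ≤ ∑ x ∈ s, b x := Finset.sum_nonneg hb'
      rw [abs_le]; constructor <;> linarith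
    calc (a m + ∑ x ∈ s, a x - (b m + ∑ x ∈ s, b x))^2 / (a m + ∑ x ∈ s, a x + (b m + ∑ x ∈ s, b x))
        = ((a m - b m) + (∑ x ∈ s, a x - ∑ x ∈ s, b x))^2 / ((a m + b m) + (∑ x ∈ s, a x + ∑ x ∈ s, b x)) := by
          ring_nf
      _ ≤ (a m - b m)^2/(a m + b m) + (∑ x ∈ s, a x - ∑ x ∈ s, b x)^2/(∑ x ∈ s, a x + ∑ x ∈ s, b x) :=
          r_two_var _ _ _ _ h1 h2
      _ ≤ _ := by linarith [ih ha' hb']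

lemma r_tri_le (p q : ℝ) (hp : 0 ≤ p) (hq : 0 ≤ q) :
    (p-q)^2/(p+q) ≤ 2*(Real.sqrt p - Real.sqrt q)^2 := by
  rcases eq_or_lt_of_le (add_nonneg hp hq) with h | h
  · have hp0 : p = 0 := by linarith
    have hq0 : q = 0 := by linarith
    simp [hp0, hq0]
  · rw [div_le_iff₀ h]
    nlinarith [Real.sq_sqrt hp, Real.sq_sqrt hq, Real.sqrt_nonneg p, Real.sqrt_nonneg q,
      sq_nonneg (Real.sqrt p - Real.sqrt q), sq_nonneg (Real.sqrt p + Real.sqrt q),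
      mul_nonneg (Real.sqrt_nonneg p) (Real.sqrt_nonneg q),
      sq_nonneg (Real.sqrt p * Real.sqrt q)]

lemma r_tri_ge (p q : ℝ) (hp : 0 ≤ p) (hq : 0 ≤ q) :
    (Real.sqrt p - Real.sqrt q)^2 ≤ (p-q)^2/(p+q) := by
  rcases eq_or_lt_of_le (add_nonneg hp hq) with h | h
  · have hp0 : p = 0 := by linarith
    have hq0 : q = 0 := by linarith
    simp [hp0, hq0]
  · rw [le_div_iff₀ h]
    nlinarith [Real.sq_sqrt hp, Real.sq_sqrt hq, Real.sqrt_nonneg p, Real.sqrt_nonneg q,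
      sq_nonneg (Real.sqrt p - Real.sqrt q), sq_nonneg (Real.sqrt p + Real.sqrt q),
      mul_nonneg (Real.sqrt_nonneg p) (Real.sqrt_nonneg q)]

lemma r_amgm (a b : ℝ) (ha : 0 ≤ a) (hb : 0 ≤ b) :
    Real.sqrt a * Real.sqrt b ≤ (a + b)/2 := by
  nlinarith [Real.sq_sqrt ha, Real.sq_sqrt hb, sq_nonneg (Real.sqrt a - Real.sqrt b)]

lemma r_scale (c a b : ℝ) (hc : 0 < c) (ha : 0 ≤ a) (hb : 0 ≤ b) :
    (c*a - c*b)^2 / (c*a + c*b) = c * ((a-b)^2/(a+b)) := by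
  rcases eq_or_lt_of_le (add_nonneg ha hb) with h | h
  · have ha0 : a = 0 := by linarith
    have hb0 : b = 0 := by linarith
    simp [ha0, hb0]
  · have h2 : c*a + c*b ≠ 0 := by nlinarith
    have h3 : a + b ≠ 0 := ne_of_gt h
    field_simp

lemma sq_sqrt_sub (A B : ℝ) (hA : 0 ≤ A) (hB : 0 ≤ B) :
    (Real.sqrt A - Real.sqrt B)^2 = A + B - 2*(Real.sqrt A * Real.sqrt B) := by
  have := Real.sq_sqrt hA
  have := Real.sq_sqrt hB
  nlinarith [Real.sqrt_nonneg A]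



end AuxReal

section AuxK
variable {k : ℕ}
-- pairing of Fin (2*k) into k pairs
lemma nat_sum_pair (g : ℕ → ℝ) (K : ℕ) :
    ∑ m ∈ range (2*K), g m = ∑ m ∈ range K, (g (2*m) + g (2*m+1)) := by
  induction K with
  | zero => simp
  | succ K ih =>
    rw [show 2*(K+1) = (2*K)+1+1 by ring, Finset.sum_range_succ, Finset.sum_range_succ,
      Finset.sum_range_succ, ih]
    ring

lemma sum_pair {k : ℕ} (f : Fin (2*k) → ℝ) :
    ∑ x, f x = ∑ i : Fin k, (f (lo i) + f (hi i)) := by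
  classical
  set g : ℕ → ℝ := fun m => if h : m < 2*k then f ⟨m, h⟩ else 0 with hg
  have h1 : ∑ x, f x = ∑ x : Fin (2*k), g x.val := by
    apply Finset.sum_congr rfl; intro x _; rw [hg]; simp [x.isLt]
  rw [h1, Fin.sum_univ_eq_sum_range g (2*k), nat_sum_pair g k,
    ← Fin.sum_univ_eq_sum_range (fun m => g (2*m) + g (2*m+1)) k]
  apply Finset.sum_congr rfl; intro i _
  have h2 : 2*i.val < 2*k := by have := i.isLt; omega
  have h3 : 2*i.val+1 < 2*k := by have := i.isLt; omega
  simp only [hg, dif_pos h2, dif_pos h3]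
  rfl

lemma pm_mul_self (b : Bool) : pm b * pm b = 1 := by cases b <;> simp [pm]
lemma pm_not (b : Bool) : pm (!b) = - pm b := by cases b <;> simp [pm]
lemma abs_pm (b : Bool) : |pm b| = 1 := by cases b <;> simp [pm]

lemma pan_lo {k : ℕ} (ε : ℝ) (z : Fin k → Bool) (j : Fin k) :
    paninski k ε z (lo j) = (1 + 2*ε*pm (z j)) / (2*k) := by
  have h1 : (2*j.val) % 2 = 0 := by omega
  have h2 : (⟨(2*j.val)/2, by have := j.isLt; omega⟩ : Fin k) = j := by
    apply Fin.ext; simp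
  simp only [paninski, lo, h1, if_true]
  rw [show ((⟨2*j.val/2, by have := j.isLt; omega⟩ : Fin k)) = j from h2]
  ring_nf

lemma pan_hi {k : ℕ} (ε : ℝ) (z : Fin k → Bool) (j : Fin k) :
    paninski k ε z (hi j) = (1 - 2*ε*pm (z j)) / (2*k) := by
  have h1 : ¬((2*j.val+1) % 2 = 0) := by omega
  have h2 : (⟨(2*j.val+1)/2, by have := j.isLt; omega⟩ : Fin k) = j := by
    apply Fin.ext; simp; omega
  simp only [paninski, hi, h1, if_neg, if_false]
  rw [show ((⟨(2*j.val+1)/2, by have := j.isLt; omega⟩ : Fin k)) = j from h2]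
  ring_nf

lemma pan_lb {k : ℕ} (hk : 1 ≤ k) {ε : ℝ} (hε : 0 ≤ ε) (hε' : ε ≤ 1/4) (z : Fin k → Bool)
    (x : Fin (2*k)) : 1/(4*k) ≤ paninski k ε z x := by
  have hk0 : (0:ℝ) < k := by exact_mod_cast hk
  set s : ℝ := (if x.val % 2 = 0 then (1 : ℝ) else -1) * (2 * ε) *
    pm (z ⟨x.val / 2, by have := x.isLt; omega⟩) with hs
  have habs : |s| ≤ 2*ε := by
    rw [hs, abs_mul, abs_mul, abs_pm, mul_one, abs_of_nonneg (by linarith : (0:ℝ) ≤ 2*ε)]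
    have : |if (x.val % 2 = 0) then (1:ℝ) else -1| = 1 := by split <;> simp
    rw [this, one_mul]
  have h1 : (1:ℝ)/2 ≤ 1 + s := by
    have := abs_le.mp habs
    linarith
  have : paninski k ε z x = (1 + s)/(2*k) := rfl
  rw [this]
  rw [div_le_div_iff₀ (by linarith) (by linarith)]
  nlinarith



lemma pan_dist (hk : 1 ≤ k) {ε : ℝ} (hε : 0 ≤ ε) (hε' : ε ≤ 1/4) (z : Fin k → Bool) :
    IsDist (paninski k ε z) := by
  have hk0 : (0:ℝ) < k := by exact_mod_cast hk
  constructor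
  · intro x
    have := pan_lb hk hε hε' z x
    have : (0:ℝ) ≤ 1/(4*k) := by positivity
    linarith [pan_lb hk hε hε' z x]
  · rw [sum_pair]
    have : ∀ i : Fin k, paninski k ε z (lo i) + paninski k ε z (hi i) = 1/k := by
      intro i
      rw [pan_lo, pan_hi, ← add_div,
        show (1 + 2*ε*pm (z i)) + (1 - 2*ε*pm (z i)) = 2 by ring,
        show (2:ℝ)/(2*k) = 1/k by
          rw [div_eq_div_iff (by linarith) (by linarith)]; ring]
    rw [Finset.sum_congr rfl (fun i _ => this i), Finset.sum_const, Finset.card_univ,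
      Fintype.card_fin]
    rw [nsmul_eq_mul, mul_one_div, div_self (ne_of_gt hk0)]

/-- flip coordinate `i`. -/
def flipAt (z : Fin k → Bool) (i : Fin k) : Fin k → Bool := Function.update z i (!z i)

lemma flipAt_same (z : Fin k → Bool) (i : Fin k) : flipAt z i i = !z i := by
  rw [flipAt]; exact Function.update_self i (!z i) z

lemma flipAt_ne (z : Fin k → Bool) {i j : Fin k} (h : j ≠ i) : flipAt z i j = z j := by
  rw [flipAt]; exact Function.update_of_ne h (!z i) z

lemma flipAt_invol (i : Fin k) : Function.Involutive (fun z => flipAt z i) := by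
  intro z
  funext j
  by_cases h : j = i
  · subst h; simp [flipAt]
  · simp [flipAt_ne _ h]

lemma pan_pair_diff (hk : 1 ≤ k) (ε : ℝ) (z : Fin k → Bool) (i : Fin k)
    (W : Fin (2*k) → ℝ) :
    ∑ x, paninski k ε z x * W x - ∑ x, paninski k ε (flipAt z i) x * W x
      = (2*ε*pm (z i)/k) * (W (lo i) - W (hi i)) := by
  have hk0 : (0:ℝ) < k := by exact_mod_cast hk
  rw [← Finset.sum_sub_distrib]
  have h1 : ∀ x, paninski k ε z x * W x - paninski k ε (flipAt z i) x * W x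
      = (paninski k ε z x - paninski k ε (flipAt z i) x) * W x := fun x => by ring
  rw [Finset.sum_congr rfl (fun x _ => h1 x),
    sum_pair (fun x => (paninski k ε z x - paninski k ε (flipAt z i) x) * W x)]
  rw [Finset.sum_eq_single i]
  · rw [pan_lo, pan_hi, pan_lo, pan_hi, flipAt_same, pm_not]
    field_simp
    ring
  · intro j _ hj
    rw [pan_lo, pan_hi, pan_lo, pan_hi, flipAt_ne _ hj]
    ring
  · intro h; exact absurd (Finset.mem_univ i) h

lemma pan_pair_add_lb (hk : 1 ≤ k) {ε : ℝ} (hε : 0 ≤ ε) (hε' : ε ≤ 1/4)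
    (z : Fin k → Bool) (i : Fin k) (W : Fin (2*k) → ℝ) (hW : ∀ x, 0 ≤ W x) :
    (1/(2*k)) * ∑ x, W x
      ≤ ∑ x, paninski k ε z x * W x + ∑ x, paninski k ε (flipAt z i) x * W x := by
  have hk0 : (0:ℝ) < k := by exact_mod_cast hk
  rw [← Finset.sum_add_distrib, Finset.mul_sum]
  apply Finset.sum_le_sum
  intro x _
  have h1 := pan_lb hk hε hε' z x
  have h2 := pan_lb hk hε hε' (flipAt z i) x
  have h3 : (1/(2*(k:ℝ))) ≤ paninski k ε z x + paninski k ε (flipAt z i) x := by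
    have : (1:ℝ)/(2*k) = 1/(4*k) + 1/(4*k) := by field_simp; ring
    linarith
  calc (1/(2*(k:ℝ))) * W x ≤ (paninski k ε z x + paninski k ε (flipAt z i) x) * W x :=
        mul_le_mul_of_nonneg_right h3 (hW x)
    _ = _ := by ring

lemma sum_flip_filter (i : Fin k) (g : (Fin k → Bool) → ℝ) :
    ∑ z ∈ filter (fun z => z i = false) univ, g z
      = ∑ z ∈ filter (fun z => z i = true) univ, g (flipAt z i) := by
  apply Finset.sum_nbij' (fun z => flipAt z i) (fun z => flipAt z i)
  · intro a ha
    simp only [Finset.mem_filter, Finset.mem_univ, true_and] at ha ⊢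
    simp [flipAt_same, ha]
  · intro a ha
    simp only [Finset.mem_filter, Finset.mem_univ, true_and] at ha ⊢
    simp [flipAt_same, ha]
  · intro a _; exact flipAt_invol i a
  · intro a _; exact flipAt_invol i a
  · intro a _; exact (congrArg g (flipAt_invol i a)).symm

lemma sum_indicator_half (i : Fin k) (b : Bool) :
    ∑ z : Fin k → Bool, (if z i = b then (1:ℝ) else 0) = 2^k / 2 := by
  classical
  have he := Equiv.sum_comp (Function.Involutive.toPerm _ (flipAt_invol i))
    (fun z : Fin k → Bool => if z i = b then (1:ℝ) else 0)
  have h2 : ∀ z : Fin k → Bool,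
      (if flipAt z i i = b then (1:ℝ) else 0) + (if z i = b then (1:ℝ) else 0) = 1 := by
    intro z
    rw [flipAt_same]
    cases hz : z i <;> cases b <;> simp
  have hsum : ∑ z : Fin k → Bool,
      ((if flipAt z i i = b then (1:ℝ) else 0) + (if z i = b then (1:ℝ) else 0))
      = ∑ z : Fin k → Bool, (1:ℝ) := Finset.sum_congr rfl (fun z _ => h2 z)
  rw [Finset.sum_add_distrib] at hsum
  have hcard : ∑ z : Fin k → Bool, (1:ℝ) = 2^k := by
    rw [Finset.sum_const, Finset.card_univ]
    simp [Fintype.card_fun]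
  have he' : ∑ z : Fin k → Bool, (if flipAt z i i = b then (1:ℝ) else 0)
      = ∑ z : Fin k → Bool, (if z i = b then (1:ℝ) else 0) := he
  rw [he', hcard] at hsum
  linarith


lemma pan_nonneg (hk : 1 ≤ k) {ε : ℝ} (hε : 0 ≤ ε) (hε' : ε ≤ 1/4) (z : Fin k → Bool)
    (x : Fin (2*k)) : 0 ≤ paninski k ε z x := by
  have hk0 : (0:ℝ) < k := by exact_mod_cast hk
  have := pan_lb hk hε hε' z x
  have h0 : (0:ℝ) ≤ 1/(4*k) := by positivity
  linarith

lemma step_bound (hk : 1 ≤ k) {ε : ℝ} (hε : 0 ≤ ε) (hε' : ε ≤ 1/4) {𝒴 : Type*} [Fintype 𝒴]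
    (W : Fin (2*k) → 𝒴 → ℝ) (hW : ∀ x l, 0 ≤ W x l) (z : Fin k → Bool) (i : Fin k) :
    ∑ l, (Real.sqrt (∑ x, paninski k ε z x * W x l)
        - Real.sqrt (∑ x, paninski k ε (flipAt z i) x * W x l))^2
      ≤ (8*ε^2/k) * HMat k W i i := by
  have hk0 : (0:ℝ) < k := by exact_mod_cast hk
  rw [show HMat k W i i
      = ∑ l, (W (lo i) l - W (hi i) l) * (W (lo i) l - W (hi i) l) / (∑ x, W x l) from rfl,
    Finset.mul_sum]
  apply Finset.sum_le_sum
  intro l _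
  set c := ∑ x, paninski k ε z x * W x l with hc
  set d := ∑ x, paninski k ε (flipAt z i) x * W x l with hd
  set S := ∑ x, W x l with hS
  have hc0 : 0 ≤ c := Finset.sum_nonneg fun x _ =>
    mul_nonneg (pan_nonneg hk hε hε' z x) (hW x l)
  have hd0 : 0 ≤ d := Finset.sum_nonneg fun x _ =>
    mul_nonneg (pan_nonneg hk hε hε' (flipAt z i) x) (hW x l)
  by_cases hSz : S = 0
  · have hsum0 : ∑ x, W x l = 0 := by rw [← hS]; exact hSz
    have hWz : ∀ x, W x l = 0 := fun x =>
      (Finset.sum_eq_zero_iff_of_nonneg (fun x _ => hW x l)).mp hsum0 x (Finset.mem_univ x)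
    have hcz : c = 0 := by
      rw [hc]; apply Finset.sum_eq_zero; intro x _; rw [hWz x]; ring
    have hdz : d = 0 := by
      rw [hd]; apply Finset.sum_eq_zero; intro x _; rw [hWz x]; ring
    rw [hcz, hdz, hWz, hWz, hSz]
    simp
  · have hSpos : 0 < S := lt_of_le_of_ne (Finset.sum_nonneg fun x _ => hW x l) (Ne.symm hSz)
    have hdiff : c - d = (2*ε*pm (z i)/k) * (W (lo i) l - W (hi i) l) :=
      pan_pair_diff hk ε z i (fun x => W x l)
    have hlb : (1/(2*(k:ℝ))) * S ≤ c + d :=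
      pan_pair_add_lb hk hε hε' z i (fun x => W x l) (fun x => hW x l)
    have hlb0 : (0:ℝ) < (1/(2*(k:ℝ))) * S := by positivity
    calc (Real.sqrt c - Real.sqrt d)^2 ≤ (c-d)^2/(c+d) := r_tri_ge c d hc0 hd0
      _ ≤ (c-d)^2 / ((1/(2*(k:ℝ))) * S) :=
          div_le_div_of_nonneg_left (sq_nonneg _) hlb0 hlb
      _ = 8*ε^2/(k:ℝ) * ((W (lo i) l - W (hi i) l) * (W (lo i) l - W (hi i) l) / S) := by
          rw [hdiff]
          have hSne : S ≠ 0 := hSz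
          have hkne : (k:ℝ) ≠ 0 := ne_of_gt hk0
          cases hzi : z i with
          | false => simp only [pm, Bool.false_eq_true, if_false]; field_simp; ring
          | true => simp only [pm, if_true]; field_simp; ring



end AuxK

section AuxP
variable {k n : ℕ} {𝒴 : Type*} [Fintype 𝒴]

def snocEquiv (t : ℕ) (𝒴 : Type*) : (Fin (t+1) → 𝒴) ≃ (Fin t → 𝒴) × 𝒴 where
  toFun y := (fun s => y s.castSucc, y (Fin.last t))
  invFun z := Fin.snoc z.1 z.2
  left_inv y := Fin.snoc_init_self y
  right_inv z := by
    cases z with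
    | mk y0 l => simp [Fin.snoc_castSucc, Fin.snoc_last]

lemma sum_snoc {t : ℕ} (F : (Fin (t+1) → 𝒴) → ℝ) :
    ∑ y, F y = ∑ y0 : Fin t → 𝒴, ∑ l, F (Fin.snoc y0 l) := by
  rw [← Equiv.sum_comp (snocEquiv t 𝒴).symm F, Fintype.sum_prod_type]
  rfl

lemma prefixDist_succ (π : Protocol k n 𝒴) (p : Fin (2*k) → ℝ) (t : ℕ) (ht : t + 1 ≤ n)
    (y : Fin (t+1) → 𝒴) :
    prefixDist π p (t+1) ht y
      = prefixDist π p t (Nat.le_of_succ_le ht) (fun r => y r.castSucc)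
        * ∑ x, p x * π ⟨t, ht⟩ (fun r => y r.castSucc) x (y (Fin.last t)) := by
  rw [prefixDist, Fin.prod_univ_castSucc]
  rfl

lemma prefixDist_nonneg (π : Protocol k n 𝒴) (hch : ChannelProtocol π)
    {p : Fin (2*k) → ℝ} (hp : ∀ x, 0 ≤ p x) (t : ℕ) (ht : t ≤ n) (y : Fin t → 𝒴) :
    0 ≤ prefixDist π p t ht y :=
  Finset.prod_nonneg fun s _ => Finset.sum_nonneg fun x _ =>
    mul_nonneg (hp x) (((hch _ _) x).1 _)

lemma step_nonneg (π : Protocol k n 𝒴) (hch : ChannelProtocol π)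
    {p : Fin (2*k) → ℝ} (hp : ∀ x, 0 ≤ p x) (T : Fin n) (pre : Fin T.val → 𝒴) (l : 𝒴) :
    0 ≤ ∑ x, p x * π T pre x l :=
  Finset.sum_nonneg fun x _ => mul_nonneg (hp x) (((hch T pre) x).1 l)

lemma step_sum_one (π : Protocol k n 𝒴) (hch : ChannelProtocol π)
    {p : Fin (2*k) → ℝ} (hp : IsDist p) (T : Fin n) (pre : Fin T.val → 𝒴) :
    ∑ l, ∑ x, p x * π T pre x l = 1 := by
  rw [Finset.sum_comm]
  have : ∀ x, ∑ l, p x * π T pre x l = p x := by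
    intro x
    rw [← Finset.mul_sum, ((hch T pre) x).2, mul_one]
  rw [Finset.sum_congr rfl (fun x _ => this x), hp.2]

lemma sum_prefixDist (π : Protocol k n 𝒴) (hch : ChannelProtocol π)
    {p : Fin (2*k) → ℝ} (hp : IsDist p) :
    ∀ (t : ℕ) (ht : t ≤ n), ∑ y : Fin t → 𝒴, prefixDist π p t ht y = 1 := by
  intro t
  induction t with
  | zero =>
    intro ht
    rw [Fintype.sum_unique]
    simp [prefixDist]
  | succ t ih =>
    intro ht
    rw [sum_snoc]
    have key : ∀ y0 : Fin t → 𝒴,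
        ∑ l, prefixDist π p (t+1) ht (Fin.snoc y0 l)
          = prefixDist π p t (Nat.le_of_succ_le ht) y0 := by
      intro y0
      have h1 : ∀ l : 𝒴, (fun r : Fin t => (Fin.snoc y0 l : Fin (t+1) → 𝒴) r.castSucc) = y0 :=
        fun l => funext fun r => by simp
      have h2 : ∀ l : 𝒴, (Fin.snoc y0 l : Fin (t+1) → 𝒴) (Fin.last t) = l :=
        fun l => by simp
      calc ∑ l, prefixDist π p (t+1) ht (Fin.snoc y0 l)
          = ∑ l, prefixDist π p t (Nat.le_of_succ_le ht) y0
              * ∑ x, p x * π ⟨t, ht⟩ y0 x l := by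
            apply Finset.sum_congr rfl
            intro l _
            rw [prefixDist_succ π p t ht (Fin.snoc y0 l), h1 l, h2 l]
        _ = prefixDist π p t (Nat.le_of_succ_le ht) y0 := by
            rw [← Finset.mul_sum, step_sum_one π hch hp ⟨t, ht⟩ y0, mul_one]
    rw [Finset.sum_congr rfl (fun y0 _ => key y0), ih (Nat.le_of_succ_le ht)]



lemma sqrt_prod_sub_sq (A B c d : ℝ) (hA : 0 ≤ A) (hB : 0 ≤ B) (hc : 0 ≤ c) (hd : 0 ≤ d) :
    (Real.sqrt (A*c) - Real.sqrt (B*d))^2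
      = A*c + B*d - 2*((Real.sqrt A*Real.sqrt B)*(Real.sqrt c*Real.sqrt d)) := by
  rw [Real.sqrt_mul hA, Real.sqrt_mul hB, sub_sq, mul_pow, mul_pow,
    Real.sq_sqrt hA, Real.sq_sqrt hB, Real.sq_sqrt hc, Real.sq_sqrt hd]
  ring

lemma hell_decomp (π : Protocol k n 𝒴) (hch : ChannelProtocol π)
    {p q : Fin (2*k) → ℝ} (hp : IsDist p) (hq : IsDist q) :
    ∀ (t : ℕ) (ht : t ≤ n),
    ∑ y : Fin t → 𝒴, (Real.sqrt (prefixDist π p t ht y) - Real.sqrt (prefixDist π q t ht y))^2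
      = ∑ s : Fin t, ∑ ys : Fin s.val → 𝒴,
          Real.sqrt (prefixDist π p s.val (le_trans s.isLt.le ht) ys) *
          Real.sqrt (prefixDist π q s.val (le_trans s.isLt.le ht) ys) *
          ∑ l, (Real.sqrt (∑ x, p x * π ⟨s.val, lt_of_lt_of_le s.isLt ht⟩ ys x l)
              - Real.sqrt (∑ x, q x * π ⟨s.val, lt_of_lt_of_le s.isLt ht⟩ ys x l))^2 := by
  intro t
  induction t with
  | zero =>
    intro ht
    rw [Fintype.sum_unique]
    simp [prefixDist]
  | succ t ih =>
    intro ht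
    have ht' : t ≤ n := Nat.le_of_succ_le ht
    rw [sum_snoc]
    have key : ∀ y0 : Fin t → 𝒴,
        ∑ l, (Real.sqrt (prefixDist π p (t+1) ht (Fin.snoc y0 l))
            - Real.sqrt (prefixDist π q (t+1) ht (Fin.snoc y0 l)))^2
          = (Real.sqrt (prefixDist π p t ht' y0) - Real.sqrt (prefixDist π q t ht' y0))^2
            + Real.sqrt (prefixDist π p t ht' y0) * Real.sqrt (prefixDist π q t ht' y0) *
              ∑ l, (Real.sqrt (∑ x, p x * π ⟨t, ht⟩ y0 x l)
                  - Real.sqrt (∑ x, q x * π ⟨t, ht⟩ y0 x l))^2 := by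
      intro y0
      have h1 : ∀ l : 𝒴, (fun r : Fin t => (Fin.snoc y0 l : Fin (t+1) → 𝒴) r.castSucc) = y0 :=
        fun l => funext fun r => by simp
      have h2 : ∀ l : 𝒴, (Fin.snoc y0 l : Fin (t+1) → 𝒴) (Fin.last t) = l :=
        fun l => by simp
      set A := prefixDist π p t ht' y0 with hA
      set B := prefixDist π q t ht' y0 with hB
      have hA0 : 0 ≤ A := prefixDist_nonneg π hch hp.1 t ht' y0
      have hB0 : 0 ≤ B := prefixDist_nonneg π hch hq.1 t ht' y0
      have hc0 : ∀ l, 0 ≤ ∑ x, p x * π ⟨t, ht⟩ y0 x l :=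
        fun l => step_nonneg π hch hp.1 ⟨t, ht⟩ y0 l
      have hd0 : ∀ l, 0 ≤ ∑ x, q x * π ⟨t, ht⟩ y0 x l :=
        fun l => step_nonneg π hch hq.1 ⟨t, ht⟩ y0 l
      calc ∑ l, (Real.sqrt (prefixDist π p (t+1) ht (Fin.snoc y0 l))
            - Real.sqrt (prefixDist π q (t+1) ht (Fin.snoc y0 l)))^2
          = ∑ l, (A * (∑ x, p x * π ⟨t, ht⟩ y0 x l) + B * (∑ x, q x * π ⟨t, ht⟩ y0 x l)
              - 2*((Real.sqrt A * Real.sqrt B) *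
                (Real.sqrt (∑ x, p x * π ⟨t, ht⟩ y0 x l) *
                 Real.sqrt (∑ x, q x * π ⟨t, ht⟩ y0 x l)))) := by
            apply Finset.sum_congr rfl
            intro l _
            rw [prefixDist_succ π p t ht (Fin.snoc y0 l), prefixDist_succ π q t ht (Fin.snoc y0 l),
              h1 l, h2 l]
            exact sqrt_prod_sub_sq A B _ _ hA0 hB0 (hc0 l) (hd0 l)
        _ = A * ∑ l, (∑ x, p x * π ⟨t, ht⟩ y0 x l) + B * ∑ l, (∑ x, q x * π ⟨t, ht⟩ y0 x l)
              - 2*((Real.sqrt A * Real.sqrt B) *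
                ∑ l, Real.sqrt (∑ x, p x * π ⟨t, ht⟩ y0 x l) *
                     Real.sqrt (∑ x, q x * π ⟨t, ht⟩ y0 x l)) := by
            rw [Finset.sum_sub_distrib, Finset.sum_add_distrib, ← Finset.mul_sum,
              ← Finset.mul_sum, ← Finset.mul_sum, ← Finset.mul_sum]
        _ = A + B - 2*((Real.sqrt A * Real.sqrt B) *
              (1 - (1/2) * ∑ l, (Real.sqrt (∑ x, p x * π ⟨t, ht⟩ y0 x l)
                  - Real.sqrt (∑ x, q x * π ⟨t, ht⟩ y0 x l))^2)) := by
            rw [step_sum_one π hch hp ⟨t, ht⟩ y0, step_sum_one π hch hq ⟨t, ht⟩ y0]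
            have hsq : ∑ l, (Real.sqrt (∑ x, p x * π ⟨t, ht⟩ y0 x l)
                  - Real.sqrt (∑ x, q x * π ⟨t, ht⟩ y0 x l))^2
                = 2 - 2 * ∑ l, Real.sqrt (∑ x, p x * π ⟨t, ht⟩ y0 x l) *
                     Real.sqrt (∑ x, q x * π ⟨t, ht⟩ y0 x l) := by
              have : ∀ l : 𝒴, (Real.sqrt (∑ x, p x * π ⟨t, ht⟩ y0 x l)
                  - Real.sqrt (∑ x, q x * π ⟨t, ht⟩ y0 x l))^2
                  = (∑ x, p x * π ⟨t, ht⟩ y0 x l) + (∑ x, q x * π ⟨t, ht⟩ y0 x l)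
                    - 2*(Real.sqrt (∑ x, p x * π ⟨t, ht⟩ y0 x l) *
                         Real.sqrt (∑ x, q x * π ⟨t, ht⟩ y0 x l)) :=
                fun l => sq_sqrt_sub _ _ (hc0 l) (hd0 l)
              rw [Finset.sum_congr rfl (fun l _ => this l), Finset.sum_sub_distrib,
                Finset.sum_add_distrib, step_sum_one π hch hp ⟨t, ht⟩ y0,
                step_sum_one π hch hq ⟨t, ht⟩ y0, ← Finset.mul_sum]
              ring
            rw [hsq]
            ring
        _ = _ := by
            rw [sq_sqrt_sub A B hA0 hB0]
            ring
    rw [Finset.sum_congr rfl (fun y0 _ => key y0), Finset.sum_add_distrib, ih ht',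
      Fin.sum_univ_castSucc
        (f := fun s : Fin (t+1) => ∑ ys : Fin s.val → 𝒴,
          Real.sqrt (prefixDist π p s.val (le_trans s.isLt.le ht) ys) *
          Real.sqrt (prefixDist π q s.val (le_trans s.isLt.le ht) ys) *
          ∑ l, (Real.sqrt (∑ x, p x * π ⟨s.val, lt_of_lt_of_le s.isLt ht⟩ ys x l)
              - Real.sqrt (∑ x, q x * π ⟨s.val, lt_of_lt_of_le s.isLt ht⟩ ys x l))^2)]
    rfl



end AuxP

/-- Per-coordinate information bound: for a deterministic
sequentially interactive protocol, with `Z` uniform on `{−1,+1}^k` and inputs i.i.d.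
`p_Z` given `Z`, for every `1 ≤ t ≤ n` and every coordinate `i`,
`I(Z_i; Y^t) ≤ (8ε²/k) Σ_{s=1}^{t} E[H(W^{Y^{s−1}})_{i,i}]` (information in nats),
the expectation being over the transcript prefix `Y^{s−1}` under the mixture. -/
theorem per_coordinate_information_bound
    (k n : ℕ) (hk : 1 ≤ k) (ε : ℝ) (hε : 0 < ε) (hε' : ε ≤ 1 / 4)
    (𝒴 : Type) [Fintype 𝒴]
    (π : Protocol k n 𝒴) (hch : ChannelProtocol π)
    (t : ℕ) (ht1 : 1 ≤ t) (ht : t ≤ n) (i : Fin k) :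
    miNats (coordJoint
        (fun z y => (1 / 2 ^ k : ℝ) * prefixDist π (paninski k ε z) t ht y) i)
      ≤ (8 * ε ^ 2 / (k : ℝ)) * ∑ s : Fin t, ∑ ys : Fin s.val → 𝒴,
          ((1 / 2 ^ k : ℝ) * ∑ z : Fin k → Bool,
              prefixDist π (paninski k ε z) s.val (le_trans s.isLt.le ht) ys) *
            HMat k (π ⟨s.val, lt_of_lt_of_le s.isLt ht⟩ ys) i i := by
  classical
  have hk0 : (0:ℝ) < k := by exact_mod_cast hk
  have hε0 : (0:ℝ) ≤ ε := le_of_lt hε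
  have hpow : (0:ℝ) < (1/2^k : ℝ) := by positivity
  have hdist : ∀ z : Fin k → Bool, IsDist (paninski k ε z) := fun z => pan_dist hk hε0 hε' z
  have hPnn : ∀ (z : Fin k → Bool) (s : ℕ) (hs : s ≤ n) (ys : Fin s → 𝒴),
      0 ≤ prefixDist π (paninski k ε z) s hs ys :=
    fun z s hs ys => prefixDist_nonneg π hch (hdist z).1 s hs ys
  have hPsum : ∀ (z : Fin k → Bool) (s : ℕ) (hs : s ≤ n),
      ∑ ys : Fin s → 𝒴, prefixDist π (paninski k ε z) s hs ys = 1 :=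
    fun z s hs => sum_prefixDist π hch (hdist z) s hs
  set S : Finset (Fin k → Bool) := Finset.univ.filter (fun z => z i = true) with hSdef
  set J : Bool → (Fin t → 𝒴) → ℝ := coordJoint
      (fun z y => (1 / 2 ^ k : ℝ) * prefixDist π (paninski k ε z) t ht y) i with hJdef
  -- basic facts about J
  have hJnn : ∀ b y, 0 ≤ J b y := by
    intro b y
    apply Finset.sum_nonneg
    intro z _
    split
    · exact mul_nonneg hpow.le (hPnn z t ht y)
    · exact le_refl 0
  have hmarg : ∀ b, ∑ y : Fin t → 𝒴, J b y = 1/2 := by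
    intro b
    rw [show (∑ y : Fin t → 𝒴, J b y) = ∑ y : Fin t → 𝒴, ∑ z : Fin k → Bool,
        (if z i = b then (1/2^k : ℝ) * prefixDist π (paninski k ε z) t ht y else 0) from rfl,
      Finset.sum_comm]
    have hone : ∀ z : Fin k → Bool, ∑ y : Fin t → 𝒴,
        (if z i = b then (1/2^k : ℝ) * prefixDist π (paninski k ε z) t ht y else 0)
          = (if z i = b then (1:ℝ) else 0) * (1/2^k) := by
      intro z
      by_cases h : z i = b
      · simp only [h, if_true]
        rw [← Finset.mul_sum, hPsum z t ht]
        ring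
      · simp [h]
    rw [Finset.sum_congr rfl (fun z _ => hone z), ← Finset.sum_mul, sum_indicator_half i b]
    have h2k : (2:ℝ)^k ≠ 0 := by positivity
    field_simp
  have hJt : ∀ y, J true y = ∑ z ∈ S, (1/2^k : ℝ) * prefixDist π (paninski k ε z) t ht y := by
    intro y
    rw [hSdef, Finset.sum_filter]
    rfl
  have hJf : ∀ y, J false y
      = ∑ z ∈ S, (1/2^k : ℝ) * prefixDist π (paninski k ε (flipAt z i)) t ht y := by
    intro y
    rw [show J false y = ∑ z : Fin k → Bool,
        (if z i = false then (1/2^k : ℝ) * prefixDist π (paninski k ε z) t ht y else 0) from rfl,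
      ← Finset.sum_filter (fun z => z i = false)
        (fun z => (1/2^k : ℝ) * prefixDist π (paninski k ε z) t ht y),
      sum_flip_filter i (fun z => (1/2^k : ℝ) * prefixDist π (paninski k ε z) t ht y), hSdef]
  -- Step 1 : mutual information ≤ triangular discrimination
  have h1 : miNats J ≤ ∑ y : Fin t → 𝒴, (J true y - J false y)^2 / (J true y + J false y) := by
    have heq : miNats J = ∑ y : Fin t → 𝒴,
        (J true y * Real.log (J true y / (1/2 * (J true y + J false y)))
          + J false y * Real.log (J false y / (1/2 * (J true y + J false y)))) := by
      rw [show miNats J = ∑ a, ∑ y : Fin t → 𝒴,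
          J a y * Real.log (J a y / ((∑ b', J a b') * (∑ a', J a' y))) from rfl,
        Fintype.sum_bool, ← Finset.sum_add_distrib]
      apply Finset.sum_congr rfl
      intro y _
      rw [hmarg true, hmarg false, Fintype.sum_bool (fun a => J a y)]
    rw [heq]
    apply Finset.sum_le_sum
    intro y _
    exact r_log _ _ (hJnn true y) (hJnn false y)
  -- Step 2 : joint convexity (Engel form)
  have h2 : ∑ y : Fin t → 𝒴, (J true y - J false y)^2 / (J true y + J false y)
      ≤ ∑ y : Fin t → 𝒴, ∑ z ∈ S,
        ((1/2^k : ℝ) * prefixDist π (paninski k ε z) t ht y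
          - (1/2^k : ℝ) * prefixDist π (paninski k ε (flipAt z i)) t ht y)^2
        / ((1/2^k : ℝ) * prefixDist π (paninski k ε z) t ht y
          + (1/2^k : ℝ) * prefixDist π (paninski k ε (flipAt z i)) t ht y) := by
    apply Finset.sum_le_sum
    intro y _
    rw [hJt y, hJf y]
    exact r_engel S _ _ (fun z _ => mul_nonneg hpow.le (hPnn z t ht y))
      (fun z _ => mul_nonneg hpow.le (hPnn (flipAt z i) t ht y))
  -- Step 3 : pull out the factor 2^{-k}
  have h3 : ∑ y : Fin t → 𝒴, ∑ z ∈ S,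
        ((1/2^k : ℝ) * prefixDist π (paninski k ε z) t ht y
          - (1/2^k : ℝ) * prefixDist π (paninski k ε (flipAt z i)) t ht y)^2
        / ((1/2^k : ℝ) * prefixDist π (paninski k ε z) t ht y
          + (1/2^k : ℝ) * prefixDist π (paninski k ε (flipAt z i)) t ht y)
      = ∑ z ∈ S, (1/2^k : ℝ) * ∑ y : Fin t → 𝒴,
          (prefixDist π (paninski k ε z) t ht y
            - prefixDist π (paninski k ε (flipAt z i)) t ht y)^2
          / (prefixDist π (paninski k ε z) t ht y
            + prefixDist π (paninski k ε (flipAt z i)) t ht y) := by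
    rw [Finset.sum_comm]
    apply Finset.sum_congr rfl
    intro z _
    rw [Finset.mul_sum]
    apply Finset.sum_congr rfl
    intro y _
    exact r_scale (1/2^k) _ _ hpow (hPnn z t ht y) (hPnn (flipAt z i) t ht y)
  -- Step 4 : triangular discrimination ≤ 2 · Hellinger
  have h4 : ∀ z ∈ S, ∑ y : Fin t → 𝒴,
        (prefixDist π (paninski k ε z) t ht y
          - prefixDist π (paninski k ε (flipAt z i)) t ht y)^2
        / (prefixDist π (paninski k ε z) t ht y
          + prefixDist π (paninski k ε (flipAt z i)) t ht y)
      ≤ 2 * ∑ y : Fin t → 𝒴, (Real.sqrt (prefixDist π (paninski k ε z) t ht y)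
          - Real.sqrt (prefixDist π (paninski k ε (flipAt z i)) t ht y))^2 := by
    intro z _
    rw [Finset.mul_sum]
    apply Finset.sum_le_sum
    intro y _
    exact r_tri_le _ _ (hPnn z t ht y) (hPnn (flipAt z i) t ht y)
  -- Step 5+6 : Hellinger chain rule and per-step bound
  have h56 : ∀ z ∈ S, ∑ y : Fin t → 𝒴, (Real.sqrt (prefixDist π (paninski k ε z) t ht y)
          - Real.sqrt (prefixDist π (paninski k ε (flipAt z i)) t ht y))^2
      ≤ ∑ s : Fin t, ∑ ys : Fin s.val → 𝒴,
          ((prefixDist π (paninski k ε z) s.val (le_trans s.isLt.le ht) ys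
            + prefixDist π (paninski k ε (flipAt z i)) s.val (le_trans s.isLt.le ht) ys)/2)
          * ((8*ε^2/k) * HMat k (π ⟨s.val, lt_of_lt_of_le s.isLt ht⟩ ys) i i) := by
    intro z _
    rw [hell_decomp π hch (hdist z) (hdist (flipAt z i)) t ht]
    apply Finset.sum_le_sum
    intro s _
    apply Finset.sum_le_sum
    intro ys _
    apply mul_le_mul
    · exact r_amgm _ _ (hPnn z s.val (le_trans s.isLt.le ht) ys)
        (hPnn (flipAt z i) s.val (le_trans s.isLt.le ht) ys)
    · exact step_bound hk hε0 hε' (π ⟨s.val, lt_of_lt_of_le s.isLt ht⟩ ys)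
        (fun x l => ((hch ⟨s.val, lt_of_lt_of_le s.isLt ht⟩ ys) x).1 l) z i
    · exact Finset.sum_nonneg fun l _ => sq_nonneg _
    · exact div_nonneg (add_nonneg (hPnn z s.val (le_trans s.isLt.le ht) ys)
        (hPnn (flipAt z i) s.val (le_trans s.isLt.le ht) ys)) (by norm_num)
  -- Step 7 : rearrangement
  have h7 : ∑ z ∈ S, (1/2^k : ℝ) * (2 * ∑ s : Fin t, ∑ ys : Fin s.val → 𝒴,
          ((prefixDist π (paninski k ε z) s.val (le_trans s.isLt.le ht) ys
            + prefixDist π (paninski k ε (flipAt z i)) s.val (le_trans s.isLt.le ht) ys)/2)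
          * ((8*ε^2/k) * HMat k (π ⟨s.val, lt_of_lt_of_le s.isLt ht⟩ ys) i i))
      = (8 * ε ^ 2 / (k:ℝ)) * ∑ s : Fin t, ∑ ys : Fin s.val → 𝒴,
          ((1 / 2 ^ k : ℝ) * ∑ z : Fin k → Bool,
              prefixDist π (paninski k ε z) s.val (le_trans s.isLt.le ht) ys) *
            HMat k (π ⟨s.val, lt_of_lt_of_le s.isLt ht⟩ ys) i i := by
    have hstep : ∀ z ∈ S, (1/2^k : ℝ) * (2 * ∑ s : Fin t, ∑ ys : Fin s.val → 𝒴,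
          ((prefixDist π (paninski k ε z) s.val (le_trans s.isLt.le ht) ys
            + prefixDist π (paninski k ε (flipAt z i)) s.val (le_trans s.isLt.le ht) ys)/2)
          * ((8*ε^2/k) * HMat k (π ⟨s.val, lt_of_lt_of_le s.isLt ht⟩ ys) i i))
        = ∑ s : Fin t, ∑ ys : Fin s.val → 𝒴, ((1/2^k : ℝ) *
            ((8*ε^2/k) * HMat k (π ⟨s.val, lt_of_lt_of_le s.isLt ht⟩ ys) i i))
          * (prefixDist π (paninski k ε z) s.val (le_trans s.isLt.le ht) ys
            + prefixDist π (paninski k ε (flipAt z i)) s.val (le_trans s.isLt.le ht) ys) := by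
      intro z _
      rw [Finset.mul_sum, Finset.mul_sum]
      apply Finset.sum_congr rfl
      intro s _
      rw [Finset.mul_sum, Finset.mul_sum]
      apply Finset.sum_congr rfl
      intro ys _
      ring
    rw [Finset.sum_congr rfl hstep, Finset.sum_comm]
    rw [Finset.mul_sum]
    apply Finset.sum_congr rfl
    intro s _
    rw [Finset.sum_comm, Finset.mul_sum]
    apply Finset.sum_congr rfl
    intro ys _
    have hfull : ∑ z ∈ S,
        (prefixDist π (paninski k ε z) s.val (le_trans s.isLt.le ht) ys
          + prefixDist π (paninski k ε (flipAt z i)) s.val (le_trans s.isLt.le ht) ys)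
        = ∑ z : Fin k → Bool, prefixDist π (paninski k ε z) s.val (le_trans s.isLt.le ht) ys := by
      rw [Finset.sum_add_distrib, hSdef,
        ← sum_flip_filter i (fun z => prefixDist π (paninski k ε z) s.val (le_trans s.isLt.le ht) ys)]
      have hfilter : Finset.univ.filter (fun z : Fin k → Bool => z i = false)
          = Finset.univ.filter (fun z : Fin k → Bool => ¬ (z i = true)) := by
        apply Finset.filter_congr
        intro z _
        simp
      rw [hfilter, Finset.sum_filter_add_sum_filter_not]
    rw [← Finset.mul_sum, hfull]
    ring
  calc miNats J ≤ ∑ y : Fin t → 𝒴, (J true y - J false y)^2 / (J true y + J false y) := h1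
    _ ≤ _ := h2
    _ = _ := h3
    _ ≤ ∑ z ∈ S, (1/2^k : ℝ) * (2 * ∑ y : Fin t → 𝒴,
          (Real.sqrt (prefixDist π (paninski k ε z) t ht y)
            - Real.sqrt (prefixDist π (paninski k ε (flipAt z i)) t ht y))^2) := by
        apply Finset.sum_le_sum
        intro z hz
        exact mul_le_mul_of_nonneg_left (h4 z hz) hpow.le
    _ ≤ ∑ z ∈ S, (1/2^k : ℝ) * (2 * ∑ s : Fin t, ∑ ys : Fin s.val → 𝒴,
          ((prefixDist π (paninski k ε z) s.val (le_trans s.isLt.le ht) ys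
            + prefixDist π (paninski k ε (flipAt z i)) s.val (le_trans s.isLt.le ht) ys)/2)
          * ((8*ε^2/k) * HMat k (π ⟨s.val, lt_of_lt_of_le s.isLt ht⟩ ys) i i)) := by
        apply Finset.sum_le_sum
        intro z hz
        exact mul_le_mul_of_nonneg_left
          (mul_le_mul_of_nonneg_left (h56 z hz) (by norm_num)) hpow.le
    _ = _ := h7

end Paper
end

section
/- Let k ≥ 1, let W be a channel from [2k] to a finite alphabet 𝒴, and let p be a probability distribution on [2k] satisfying p(2i−1) + p(2i) = 1/k for every i ∈ {1,…,k}. Define v ∈ ℝ^k by v_i = k·(p(2i−1) − p(2i)), let u be the uniform distribution on [2k], and write W∘p for the output distribution y ↦ Σ_{x∈[2k]} p(x) W(y|x). Then χ²(W∘p ‖ W∘u) = (1/(2k)) · vᵀ H(W) v; in particular, χ²(W∘p ‖ W∘u) ≤ (1/(2k)) · ‖H(W)‖_op · ‖v‖₂². -/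
open Finset

namespace Paper

private lemma sum_pairs {k : ℕ} (f : Fin (2 * k) → ℝ) :
    ∑ x, f x = ∑ i : Fin k, (f (lo i) + f (hi i)) := by
  have hbij : Function.Bijective (fun q : Fin k × Bool =>
      (if q.2 then hi q.1 else lo q.1 : Fin (2*k))) := by
    rw [Fintype.bijective_iff_injective_and_card]
    constructor
    · rintro ⟨i, b⟩ ⟨j, c⟩ h
      cases b <;> cases c <;> simp [Fin.ext_iff, lo, hi] at h ⊢ <;> omega
    · simp [Fintype.card_prod]; ring
  rw [← Fintype.sum_bijective _ hbij (fun q => f _) f (fun _ => rfl)]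
  rw [Fintype.sum_prod_type]
  congr 1; ext i
  rw [Fintype.sum_bool]
  simp [add_comm]

private lemma quad_le {k : ℕ} (A : Matrix (Fin k) (Fin k) ℝ) (hA : A.IsHermitian)
    (v : Fin k → ℝ) :
    ∑ i, ∑ j, v i * A i j * v j ≤ (⨆ i, |hA.eigenvalues i|) * ∑ i, (v i)^2 := by
  classical
  set U : Matrix (Fin k) (Fin k) ℝ := (hA.eigenvectorUnitary : Matrix (Fin k) (Fin k) ℝ) with hU
  set lam := hA.eigenvalues with hlam
  have hAij : ∀ i j, A i j = ∑ l, U i l * lam l * U j l := by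
    intro i j
    conv_lhs => rw [hA.spectral_theorem]
    simp only [Unitary.conjStarAlgAut_apply, Unitary.coe_star, Matrix.mul_apply, Matrix.diagonal_apply, Matrix.star_apply, star_trivial,
      Function.comp_apply, mul_ite, ite_mul, mul_zero, zero_mul, Finset.sum_ite_eq,
      Finset.sum_ite_eq', Finset.mem_univ, if_true, Finset.sum_mul, Finset.mul_sum]
    simp [hU, hlam]
  set w : Fin k → ℝ := fun l => ∑ i, U i l * v i with hw
  have hUU : ∀ i j, ∑ l, U i l * U j l = if i = j then (1:ℝ) else 0 := by
    intro i j
    have h1 : U * star U = 1 := Matrix.mem_unitaryGroup_iff.mp hA.eigenvectorUnitary.2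
    have h2 : (U * star U) i j = (1 : Matrix (Fin k) (Fin k) ℝ) i j := by rw [h1]
    simpa [Matrix.mul_apply, Matrix.one_apply, Matrix.star_apply] using h2
  have step : ∀ i j, v i * A i j * v j = ∑ l, lam l * ((U i l * v i) * (U j l * v j)) := by
    intro i j
    rw [hAij i j, Finset.mul_sum, Finset.sum_mul]
    congr 1; ext l; ring
  have hQ : ∑ i, ∑ j, v i * A i j * v j = ∑ l, lam l * (w l)^2 := by
    calc ∑ i, ∑ j, v i * A i j * v j
        = ∑ i, ∑ j, ∑ l, lam l * ((U i l * v i) * (U j l * v j)) := by simp_rw [step]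
      _ = ∑ i, ∑ l, ∑ j, lam l * ((U i l * v i) * (U j l * v j)) := by
          congr 1; ext i; exact Finset.sum_comm
      _ = ∑ l, ∑ i, ∑ j, lam l * ((U i l * v i) * (U j l * v j)) := Finset.sum_comm
      _ = ∑ l, lam l * (w l)^2 := by
          congr 1; ext l
          rw [hw]; simp only [pow_two]
          rw [Finset.sum_mul_sum, Finset.mul_sum]
          congr 1; ext i
          rw [Finset.mul_sum]
  have hwv : ∑ l, (w l)^2 = ∑ i, (v i)^2 := by
    have key : ∀ i j : Fin k, ∑ l, (U i l * v i) * (U j l * v j)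
        = (if i = j then (1:ℝ) else 0) * (v i * v j) := by
      intro i j
      rw [← hUU i j, Finset.sum_mul]
      congr 1; ext l; ring
    calc ∑ l, (w l)^2 = ∑ l, ∑ i, ∑ j, (U i l * v i) * (U j l * v j) := by
          simp_rw [hw, pow_two, Finset.sum_mul_sum]
      _ = ∑ i, ∑ l, ∑ j, (U i l * v i) * (U j l * v j) := Finset.sum_comm
      _ = ∑ i, ∑ j, ∑ l, (U i l * v i) * (U j l * v j) := by
          congr 1; ext i; exact Finset.sum_comm
      _ = ∑ i, ∑ j, (if i = j then (1:ℝ) else 0) * (v i * v j) := by simp_rw [key]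
      _ = ∑ i, (v i)^2 := by
          simp [ite_mul, Finset.sum_ite_eq', pow_two]
  rw [hQ]
  have hbdd : BddAbove (Set.range fun i => |lam i|) := (Set.finite_range _).bddAbove
  calc ∑ l, lam l * (w l)^2 ≤ ∑ l, (⨆ i, |lam i|) * (w l)^2 := by
        apply Finset.sum_le_sum
        intro l _
        exact mul_le_mul_of_nonneg_right ((le_abs_self _).trans (le_ciSup hbdd l)) (sq_nonneg _)
    _ = (⨆ i, |lam i|) * ∑ i, (v i)^2 := by rw [← Finset.mul_sum, hwv]

/-- For a channel `W` and a distribution `p` on `[2k]` with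
`p(2i−1) + p(2i) = 1/k` for all `i`, setting `v_i = k (p(2i−1) − p(2i))`,
`χ²(W∘p ‖ W∘u) = (1/(2k)) vᵀ H(W) v ≤ (1/(2k)) ‖H(W)‖_op ‖v‖₂²`. -/
theorem chisq_quadratic_form
    (k : ℕ) (hk : 1 ≤ k) (𝒴 : Type) [Fintype 𝒴]
    (W : Fin (2 * k) → 𝒴 → ℝ) (hW : IsChannel W)
    (p : Fin (2 * k) → ℝ) (hp : IsDist p)
    (hpair : ∀ i : Fin k, p (lo i) + p (hi i) = 1 / (k : ℝ)) :
    chiSq (fun y => ∑ x, p x * W x y) (fun y => ∑ x, uniform2k k x * W x y)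
        = (1 / (2 * (k : ℝ))) *
            ∑ i : Fin k, ∑ i' : Fin k,
              ((k : ℝ) * (p (lo i) - p (hi i))) * HMat k W i i' *
                ((k : ℝ) * (p (lo i') - p (hi i'))) ∧
      chiSq (fun y => ∑ x, p x * W x y) (fun y => ∑ x, uniform2k k x * W x y)
        ≤ (1 / (2 * (k : ℝ))) * opNorm (HMat k W) *
            ∑ i : Fin k, ((k : ℝ) * (p (lo i) - p (hi i))) ^ 2 := by
  have hk0 : (k:ℝ) ≠ 0 := Nat.cast_ne_zero.mpr (by omega)
  have h2k : (2 * (k:ℝ)) ≠ 0 := by positivity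
  set v : Fin k → ℝ := fun i => (k : ℝ) * (p (lo i) - p (hi i)) with hv
  -- output distributions
  have hQy : ∀ y, (∑ x, uniform2k k x * W x y) = (2*(k:ℝ))⁻¹ * (∑ x, W x y) := by
    intro y
    rw [Finset.mul_sum]
    refine Finset.sum_congr rfl fun x _ => ?_
    simp [uniform2k]
  have hPQ : ∀ y, (∑ x, p x * W x y) - (∑ x, uniform2k k x * W x y)
      = (2*(k:ℝ))⁻¹ * (∑ i, v i * (W (lo i) y - W (hi i) y)) := by
    intro y
    rw [← Finset.sum_sub_distrib]
    rw [sum_pairs (fun x => p x * W x y - uniform2k k x * W x y)]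
    rw [Finset.mul_sum]
    refine Finset.sum_congr rfl fun i _ => ?_
    have h1 : (k:ℝ) * (p (lo i) + p (hi i)) = 1 := by
      rw [hpair i]; field_simp
    have hlo : p (lo i) - (2*(k:ℝ))⁻¹ = v i * (2*(k:ℝ))⁻¹ := by
      rw [hv]
      field_simp
      linear_combination h1
    have hhi : p (hi i) - (2*(k:ℝ))⁻¹ = -(v i) * (2*(k:ℝ))⁻¹ := by
      rw [hv]
      field_simp
      linear_combination h1
    simp only [uniform2k]
    linear_combination W (lo i) y * hlo + W (hi i) y * hhi
  -- LHS as a sum over y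
  have hL : chiSq (fun y => ∑ x, p x * W x y) (fun y => ∑ x, uniform2k k x * W x y)
      = (1/(2*(k:ℝ))) * ∑ y, (∑ i, v i * (W (lo i) y - W (hi i) y))^2 / (∑ x, W x y) := by
    rw [chiSq, Finset.mul_sum]
    refine Finset.sum_congr rfl fun y _ => ?_
    rw [hPQ y, hQy y]
    by_cases hS : (∑ x, W x y) = 0
    · simp [hS]
    · field_simp
  -- RHS quadratic form as a sum over y
  have hR : ∑ i : Fin k, ∑ i' : Fin k, v i * HMat k W i i' * v i'
      = ∑ y, (∑ i, v i * (W (lo i) y - W (hi i) y))^2 / (∑ x, W x y) := by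
    calc ∑ i : Fin k, ∑ i' : Fin k, v i * HMat k W i i' * v i'
        = ∑ i : Fin k, ∑ i' : Fin k, ∑ y,
            (v i * (W (lo i) y - W (hi i) y)) * (v i' * (W (lo i') y - W (hi i') y))
              / (∑ x, W x y) := by
          refine Finset.sum_congr rfl fun i _ => ?_
          refine Finset.sum_congr rfl fun i' _ => ?_
          simp only [HMat]
          rw [Finset.mul_sum, Finset.sum_mul]
          refine Finset.sum_congr rfl fun y _ => ?_
          ring
      _ = ∑ i : Fin k, ∑ y, ∑ i' : Fin k,
            (v i * (W (lo i) y - W (hi i) y)) * (v i' * (W (lo i') y - W (hi i') y))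
              / (∑ x, W x y) := by
          refine Finset.sum_congr rfl fun i _ => ?_; exact Finset.sum_comm
      _ = ∑ y, ∑ i : Fin k, ∑ i' : Fin k,
            (v i * (W (lo i) y - W (hi i) y)) * (v i' * (W (lo i') y - W (hi i') y))
              / (∑ x, W x y) := Finset.sum_comm
      _ = ∑ y, (∑ i, v i * (W (lo i) y - W (hi i) y))^2 / (∑ x, W x y) := by
          refine Finset.sum_congr rfl fun y _ => ?_
          rw [pow_two]
          simp_rw [div_eq_mul_inv]
          rw [Finset.sum_mul_sum, Finset.sum_mul]
          refine Finset.sum_congr rfl fun i _ => ?_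
          rw [Finset.sum_mul]
  have hEq : chiSq (fun y => ∑ x, p x * W x y) (fun y => ∑ x, uniform2k k x * W x y)
      = (1 / (2 * (k : ℝ))) * ∑ i : Fin k, ∑ i' : Fin k, v i * HMat k W i i' * v i' := by
    rw [hL, hR]
  refine ⟨hEq, ?_⟩
  rw [hEq]
  have hHerm : (HMat k W).IsHermitian := by
    ext i j
    simp only [Matrix.conjTranspose_apply, star_trivial, HMat]
    refine Finset.sum_congr rfl fun y _ => ?_
    ring
  rw [mul_assoc]
  apply mul_le_mul_of_nonneg_left _ (by positivity)
  rw [opNorm, dif_pos hHerm]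
  exact quad_le (HMat k W) hHerm v

end Paper
end
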